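/- arXiv:2005.01563 — 7 statements merged into one kernel-verified Lean document; each statement's English description precedes it below -/
import Mathlib

section
/- Let C be a Cartesian closed category, A and X objects of C, and g : A → X^A a morphism that is point-surjective (i.e., for every point q : 1 → X^A there exists p : 1 → A with g ∘ p = q). Then every endomorphism f : X → X has a fixed point, i.e., there is a point x : 1 → X with f ∘ x = x. -/
open CategoryTheory CategoryTheory.Limits MonoidalCategory CartesianClosed

theorem lawvere_fixed_point {C : Type*} [Category C] [CartesianMonoidalCategory C]
    [MonoidalClosed C] (A X : C) (g : A ⟶ A ⟹ X)
    (hg : ∀ q : 𝟙_ C ⟶ A ⟹ X, ∃ p : 𝟙_ C ⟶ A, p ≫ g = q)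
    (f : X ⟶ X) : ∃ x : 𝟙_ C ⟶ X, x ≫ f = x := by
  let k : A ⟶ X := CartesianMonoidalCategory.lift (𝟙 A) g ≫ (ihom.ev A).app X ≫ f
  obtain ⟨p, hp⟩ := hg (MonoidalClosed.curry ((ρ_ A).hom ≫ k))
  set c := MonoidalClosed.curry ((ρ_ A).hom ≫ k) with hc
  have hl : CartesianMonoidalCategory.lift p (p ≫ g)
      = p ≫ CartesianMonoidalCategory.lift (𝟙 A) g := by
    apply CartesianMonoidalCategory.hom_ext <;> simp
  have hl2 : CartesianMonoidalCategory.lift p c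
      = CartesianMonoidalCategory.lift p (𝟙 (𝟙_ C)) ≫ (A ◁ c) := by
    apply CartesianMonoidalCategory.hom_ext <;> simp
  have hl3 : CartesianMonoidalCategory.lift p (𝟙 (𝟙_ C)) ≫ (ρ_ A).hom = p := by
    rw [CartesianMonoidalCategory.rightUnitor_hom]
    apply CartesianMonoidalCategory.lift_fst
  have h1 : CartesianMonoidalCategory.lift p (p ≫ g) ≫ (ihom.ev A).app X ≫ f = p ≫ k := by
    rw [hl, Category.assoc]
  have h2 : p ≫ k = CartesianMonoidalCategory.lift p (p ≫ g) ≫ (ihom.ev A).app X := by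
    rw [hp, hl2, Category.assoc]
    have hu : (A ◁ c) ≫ (ihom.ev A).app X = (ρ_ A).hom ≫ k := by
      have := MonoidalClosed.uncurry_curry ((ρ_ A).hom ≫ k)
      rwa [MonoidalClosed.uncurry_eq] at this
    rw [hu]
    conv_rhs => rw [← Category.assoc, hl3]
  refine ⟨CartesianMonoidalCategory.lift p (p ≫ g) ≫ (ihom.ev A).app X, ?_⟩
  rw [Category.assoc, h1, h2]
end

section
/- If X is a topological space and g : A → C(A, X) is a function from a topological space A to continuous maps A → X such that the diagonal a ↦ g a a is continuous and g is surjective, then every continuous map f : X → X has a fixed point. -/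
theorem lawvere_topological {A X : Type*} [TopologicalSpace A] [TopologicalSpace X]
    (g : A → C(A, X)) (hg : Function.Surjective g)
    (hdiag : Continuous fun a => g a a)
    (f : X → X) (hf : Continuous f) : ∃ x : X, f x = x := by
  obtain ⟨a, ha⟩ := hg ⟨fun a => f (g a a), hf.comp hdiag⟩
  exact ⟨g a a, (congrArg (fun h => ContinuousMap.toFun h a) ha).symm⟩
end

section
/- The topology on 2^{ω₁} generated by the sets {x : ∀ β < α, x β = s β}, where α ranges over countable ordinals and s over functions {β : β < α} → Bool, is not compact. -/
open Cardinal

abbrev OmegaOneSeq : Type 1 := {β : Ordinal // β < (aleph 1).ord} → Bool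

/-- The topology on `2^{ω₁}` whose basic open sets fix the values on a countable
initial segment `{β : β < α}` for some `α < ω₁`. -/
def fineTop : TopologicalSpace OmegaOneSeq :=
  TopologicalSpace.generateFrom
    { U | ∃ (α : Ordinal) (_ : α < (aleph 1).ord)
        (s : ∀ β : {β : Ordinal // β < (aleph 1).ord}, β.1 < α → Bool),
        U = { x : OmegaOneSeq | ∀ (β : {β : Ordinal // β < (aleph 1).ord}) (h : β.1 < α),
          x β = s β h } }

open scoped Classical

namespace FineTopAux

lemma omega0_lt : Ordinal.omega0 < (aleph 1).ord := by
  rw [← Cardinal.ord_aleph0]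
  exact Cardinal.ord_lt_ord.mpr Cardinal.aleph0_lt_aleph_one

/-- The coordinate corresponding to a natural number. -/
def natC (n : ℕ) : {β : Ordinal // β < (aleph 1).ord} :=
  ⟨(n : Ordinal), lt_trans (Ordinal.nat_lt_omega0 n) omega0_lt⟩

noncomputable def sFun (n : ℕ) (β : {β : Ordinal // β < (aleph 1).ord}) : Bool :=
  if β.1 = (n : Ordinal) then true else false

/-- The covering family: `U none` = all-false on the finite coordinates,
`U (some n)` = first `true` at coordinate `n`. -/
noncomputable def U : Option ℕ → Set OmegaOneSeq
  | none => { x | ∀ (β : {β : Ordinal // β < (aleph 1).ord}),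
      β.1 < Ordinal.omega0 → x β = false }
  | some n => { x | ∀ (β : {β : Ordinal // β < (aleph 1).ord}),
      β.1 < ((n + 1 : ℕ) : Ordinal) → x β = sFun n β }

lemma U_isOpen (i : Option ℕ) : fineTop.IsOpen (U i) := by
  apply TopologicalSpace.GenerateOpen.basic
  cases i with
  | none =>
      exact ⟨Ordinal.omega0, omega0_lt, fun β _ => false, rfl⟩
  | some n =>
      exact ⟨((n + 1 : ℕ) : Ordinal),
        lt_trans (Ordinal.nat_lt_omega0 (n + 1)) omega0_lt,
        fun β _ => sFun n β, rfl⟩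

lemma U_covers : (Set.univ : Set OmegaOneSeq) ⊆ ⋃ i, U i := by
  intro x _
  by_cases h : ∃ n : ℕ, x (natC n) = true
  · set n := Nat.find h with hn
    refine Set.mem_iUnion.mpr ⟨some n, ?_⟩
    intro β hβ
    obtain ⟨m, hm⟩ := Ordinal.lt_omega0.mp
      (lt_trans hβ (Ordinal.nat_lt_omega0 (n + 1)))
    have hβeq : β = natC m := Subtype.ext hm
    have hmlt : m < n + 1 := by
      have := hβ
      rw [hm, Nat.cast_lt] at this
      exact this
    by_cases hmn : m = n
    · rw [hβeq, hmn]
      have hx : x (natC n) = true := Nat.find_spec h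
      rw [hx]
      simp [sFun, natC]
    · have hmlt' : m < n := lt_of_le_of_ne (Nat.lt_succ_iff.mp hmlt) hmn
      have hx : x (natC m) ≠ true := Nat.find_min h hmlt'
      have hx' : x (natC m) = false := by
        cases hxe : x (natC m) with
        | false => rfl
        | true => exact absurd hxe hx
      rw [hβeq, hx']
      have : β.1 ≠ (n : Ordinal) := by
        rw [hm]
        exact fun hc => hmn (Nat.cast_injective hc)
      simp [sFun, hβeq, natC] at this ⊢
      simp [this]
  · refine Set.mem_iUnion.mpr ⟨none, ?_⟩
    intro β hβ
    obtain ⟨m, hm⟩ := Ordinal.lt_omega0.mp hβ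
    have hβeq : β = natC m := Subtype.ext hm
    rw [hβeq]
    cases hxe : x (natC m) with
    | false => rfl
    | true => exact absurd ⟨m, hxe⟩ h

end FineTopAux

/-- The fine ("countable initial segment") topology on `2^{ω₁}` is not compact. -/
theorem fineTop_not_compact : ¬ @CompactSpace OmegaOneSeq fineTop := by
  intro h
  letI := fineTop
  have hcompact : IsCompact (Set.univ : Set OmegaOneSeq) := isCompact_univ
  obtain ⟨t, ht⟩ := hcompact.elim_finite_subcover FineTopAux.U
    FineTopAux.U_isOpen FineTopAux.U_covers
  -- pick N larger than every index in t
  set N : ℕ := (t.sup fun o => (o.getD 0)) + 1 with hN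
  -- the point with a single `true` at coordinate N
  set x : OmegaOneSeq := fun β => if β.1 = (N : Ordinal) then true else false with hx
  have hxmem : x ∈ ⋃ i ∈ t, FineTopAux.U i := ht (Set.mem_univ x)
  obtain ⟨i, hit, hxi⟩ := Set.mem_iUnion₂.mp hxmem
  cases i with
  | none =>
      have := hxi (FineTopAux.natC N) (Ordinal.nat_lt_omega0 N)
      simp [hx, FineTopAux.natC] at this
  | some n =>
      have hnN : n < N := by
        have : n ≤ t.sup fun o => (o.getD 0) :=
          Finset.le_sup (f := fun o => (o.getD 0)) hit
        omega
      have := hxi (FineTopAux.natC n)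
        (show ((n : ℕ) : Ordinal) < ((n + 1 : ℕ) : Ordinal) from
          Nat.cast_lt.mpr (Nat.lt_succ_self n))
      have hne : (n : Ordinal.{0}) ≠ (N : Ordinal.{0}) :=
        fun hc => (Nat.ne_of_lt hnN) (Nat.cast_injective hc)
      simp [hx, FineTopAux.natC, FineTopAux.sFun, hne] at this
end

section
/- Every continuous function f : 2^{ω₁} → ℝ, where 2^{ω₁} carries the product topology of discrete two-point spaces indexed by ω₁, depends on only countably many coordinates: there exists a countable set S ⊆ ω₁ such that for all x, y with x|_S = y|_S we have f x = f y. -/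
open Cardinal

lemma key_cylinder {I : Type*} (f : (I → Bool) → ℝ) (hf : Continuous f)
    (ε : ℝ) (hε : 0 < ε) :
    ∃ G : Set I, G.Finite ∧ ∀ x y : I → Bool,
      (∀ i ∈ G, x i = y i) → dist (f x) (f y) ≤ 2 * ε := by
  have hx : ∀ x : I → Bool, ∃ F : Finset I,
      ∀ y, (∀ i ∈ F, y i = x i) → f y ∈ Metric.ball (f x) ε := by
    intro x
    have hU : IsOpen (f ⁻¹' Metric.ball (f x) ε) :=
      hf.isOpen_preimage _ Metric.isOpen_ball
    rw [isOpen_pi_iff] at hU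
    obtain ⟨F, u, h1, h2⟩ := hU x (by simp [hε])
    refine ⟨F, fun y hy => h2 fun i hi => ?_⟩
    rw [hy i hi]
    exact (h1 i hi).2
  choose F hF using hx
  have hopen : ∀ x : I → Bool, IsOpen {y : I → Bool | ∀ i ∈ F x, y i = x i} := by
    intro x
    have : {y : I → Bool | ∀ i ∈ F x, y i = x i}
        = Set.pi (↑(F x)) (fun i => {x i}) := by
      ext y; simp [Set.mem_pi]
    rw [this]
    exact isOpen_set_pi (F x).finite_toSet fun a _ => isOpen_discrete _
  have hcover : (Set.univ : Set (I → Bool)) ⊆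
      ⋃ x, {y : I → Bool | ∀ i ∈ F x, y i = x i} := by
    intro x _
    exact Set.mem_iUnion.2 ⟨x, fun i _ => rfl⟩
  obtain ⟨T, hT⟩ := isCompact_univ.elim_finite_subcover _ hopen hcover
  refine ⟨⋃ t ∈ T, ↑(F t), T.finite_toSet.biUnion fun t _ => (F t).finite_toSet, ?_⟩
  intro x y hxy
  obtain ⟨t, ht, hxt⟩ := Set.mem_iUnion₂.1 (hT (Set.mem_univ x))
  have hyt : ∀ i ∈ F t, y i = t i := by
    intro i hi
    rw [← hxy i (Set.mem_iUnion₂.2 ⟨t, ht, hi⟩)]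
    exact hxt i hi
  have h1 : dist (f x) (f t) < ε := hF t x hxt
  have h2 : dist (f y) (f t) < ε := hF t y hyt
  calc dist (f x) (f y) ≤ dist (f x) (f t) + dist (f y) (f t) := dist_triangle_right _ _ _
    _ ≤ 2 * ε := by linarith

/-- Every continuous real-valued function on the product space `2^{ω₁}` depends on
only countably many coordinates. -/
theorem continuous_real_function_depends_on_countably_many_coordinates
    (f : ({β : Ordinal // β < (aleph 1).ord} → Bool) → ℝ)
    (hf : Continuous f) :
    ∃ S : Set {β : Ordinal // β < (aleph 1).ord}, S.Countable ∧
      ∀ x y : {β : Ordinal // β < (aleph 1).ord} → Bool,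
        (∀ i ∈ S, x i = y i) → f x = f y := by
  have hkey : ∀ n : ℕ, ∃ G : Set {β : Ordinal // β < (aleph 1).ord}, G.Finite ∧
      ∀ x y, (∀ i ∈ G, x i = y i) → dist (f x) (f y) ≤ 2 * (1 / (n + 1)) :=
    fun n => key_cylinder f hf (1 / (n + 1)) (by positivity)
  choose G hGfin hG using hkey
  refine ⟨⋃ n, G n, Set.countable_iUnion fun n => (hGfin n).countable, ?_⟩
  intro x y hxy
  have hd : ∀ n : ℕ, dist (f x) (f y) ≤ 2 * (1 / (n + 1)) := by
    intro n
    exact hG n x y fun i hi => hxy i (Set.mem_iUnion.2 ⟨n, hi⟩)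
  have hlim : Filter.Tendsto (fun n : ℕ => 2 * (1 / ((n : ℝ) + 1)))
      Filter.atTop (nhds 0) := by
    have := (tendsto_one_div_add_atTop_nhds_zero_nat (𝕜 := ℝ)).const_mul 2
    simpa using this
  have : dist (f x) (f y) ≤ 0 := ge_of_tendsto' hlim hd
  exact eq_of_dist_eq_zero (le_antisymm this dist_nonneg)
end

section
/- Let X be a compact metric space and let (f_γ) be a family of functions f_γ : 2^γ → X for ordinals γ < β (β a countable limit ordinal) that are uniformly equicontinuous with a common Lipschitz constant with respect to compatible metrics, and suppose the induced function F : 2^β → X satisfies a Cauchy condition along cofinal sequences: for every x ∈ 2^β and every increasing sequence γ_n → β, the sequence F(x restricted to γ_n, extended constantly) is Cauchy with modulus independent of x. Then F is continuous on 2^β with the product topology. -/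
open Cardinal Filter

/-- Transfinite continuity step: if the stage functions `f γ` (γ < β, β a countable
limit ordinal) are uniformly Lipschitz with a common constant `K` with respect to
metrics compatible with the product topologies, and the induced function `F` on `2^β`
is the limit of the stages along every cofinal sequence, with a Cauchy condition whose
modulus is uniform in the point, then `F` is continuous for the product topology. -/
theorem continuity_of_induced_map_on_two_pow_limit
    (X : Type*) [MetricSpace X] [CompactSpace X]
    (β : Ordinal) (hβ : Order.IsSuccLimit β) (hβc : β.card ≤ aleph0)
    (m : ∀ γ, γ < β → MetricSpace ({δ : Ordinal // δ < γ} → Bool))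
    (hm : ∀ γ (h : γ < β),
      (m γ h).toUniformSpace.toTopologicalSpace =
        (Pi.topologicalSpace : TopologicalSpace ({δ : Ordinal // δ < γ} → Bool)))
    (f : ∀ γ, γ < β → ({δ : Ordinal // δ < γ} → Bool) → X)
    (K : NNReal)
    (hLip : ∀ γ (h : γ < β),
      @LipschitzWith _ X (m γ h).toPseudoMetricSpace.toPseudoEMetricSpace _ K (f γ h))
    (F : ({δ : Ordinal // δ < β} → Bool) → X)
    (hF : ∀ (x : {δ : Ordinal // δ < β} → Bool) (γ : ℕ → Ordinal),
      StrictMono γ → ∀ (hlt : ∀ n, γ n < β), (∀ δ, δ < β → ∃ n, δ ≤ γ n) →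
      Tendsto (fun n => f (γ n) (hlt n) (fun δ => x ⟨δ.1, δ.2.trans (hlt n)⟩))
        atTop (nhds (F x)))
    (hCauchy : ∀ ε : ℝ, 0 < ε → ∃ N : ℕ,
      ∀ (x : {δ : Ordinal // δ < β} → Bool) (γ : ℕ → Ordinal),
      StrictMono γ → ∀ (hlt : ∀ n, γ n < β), (∀ δ, δ < β → ∃ n, δ ≤ γ n) →
      ∀ p q, N ≤ p → N ≤ q →
        dist (f (γ p) (hlt p) (fun δ => x ⟨δ.1, δ.2.trans (hlt p)⟩))
             (f (γ q) (hlt q) (fun δ => x ⟨δ.1, δ.2.trans (hlt q)⟩)) ≤ ε) :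
    Continuous F := by
  -- `{δ // δ < β}` is countable
  have hcount : Countable {δ : Ordinal // δ < β} := by
    refine Cardinal.mk_le_aleph0_iff.mp ?_
    have h1 : #{δ : Ordinal // δ < β} = Cardinal.lift.{_+1} β.card :=
      Ordinal.mk_Iio_ordinal β
    rw [h1]
    simpa using Cardinal.lift_le.mpr hβc
  have hne : Nonempty {δ : Ordinal // δ < β} := ⟨⟨0, hβ.pos⟩⟩
  obtain ⟨e, he⟩ := exists_surjective_nat {δ : Ordinal // δ < β}
  -- build a strictly monotone cofinal sequence
  set γ : ℕ → Ordinal := fun n => Nat.rec (e 0).1 (fun k ih => max (ih + 1) (e (k+1)).1) n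
    with hγ
  have hstep : ∀ n, γ (n+1) = max (γ n + 1) (e (n+1)).1 := fun n => rfl
  have hmono : StrictMono γ := by
    apply strictMono_nat_of_lt_succ
    intro n
    rw [hstep]
    exact lt_max_of_lt_left (Order.lt_succ _)
  have hlt : ∀ n, γ n < β := by
    intro n
    induction n with
    | zero => exact (e 0).2
    | succ k ih => rw [hstep]; exact max_lt (hβ.succ_lt ih) (e (k+1)).2
  have hge : ∀ n, (e n).1 ≤ γ n := by
    intro n
    cases n with
    | zero => exact le_rfl
    | succ k => rw [hstep]; exact le_max_right _ _
  have hcof : ∀ δ, δ < β → ∃ n, δ ≤ γ n := by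
    intro δ hδ
    obtain ⟨n, hn⟩ := he ⟨δ, hδ⟩
    have := hge n
    rw [hn] at this
    exact ⟨n, this⟩
  -- the approximating maps
  set g : ℕ → ({δ : Ordinal // δ < β} → Bool) → X :=
    fun n x => f (γ n) (hlt n) (fun δ => x ⟨δ.1, δ.2.trans (hlt n)⟩) with hg
  have hcont : ∀ n, Continuous (g n) := by
    intro n
    have hc : @Continuous _ _ ((m (γ n) (hlt n)).toUniformSpace.toTopologicalSpace) _
        (f (γ n) (hlt n)) :=
      @LipschitzWith.continuous _ X
        ((m (γ n) (hlt n)).toPseudoMetricSpace.toPseudoEMetricSpace) _ K _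
        (hLip (γ n) (hlt n))
    rw [hm (γ n) (hlt n)] at hc
    exact hc.comp (continuous_pi fun δ => continuous_apply _)
  have hU : TendstoUniformly g F atTop := by
    rw [Metric.tendstoUniformly_iff]
    intro ε hε
    obtain ⟨N, hN⟩ := hCauchy (ε/2) (half_pos hε)
    filter_upwards [eventually_ge_atTop N] with n hn x
    have hlim : Tendsto (fun q => g q x) atTop (nhds (F x)) := hF x γ hmono hlt hcof
    have ht : Tendsto (fun q => dist (g q x) (g n x)) atTop
        (nhds (dist (F x) (g n x))) := hlim.dist tendsto_const_nhds
    have hle : dist (F x) (g n x) ≤ ε/2 := by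
      refine le_of_tendsto ht (eventually_atTop.2 ⟨N, fun q hq => ?_⟩)
      exact hN x γ hmono hlt hcof q n hq hn
    linarith
  exact hU.continuous (Eventually.of_forall hcont).frequently
end

section
/- Every continuous function f : 2^{ω₁} → X into a metric space X, where 2^{ω₁} has the product topology, is locally constant on cones of countable length eventually: there exists a countable ordinal α such that f(x) depends only on the restriction of x to {β : β < α}. -/
open Cardinal Uniformity

theorem aux_continuous_depends_initial_segment.{u}
    (X : Type*) [MetricSpace X]
    (f : ({β : Ordinal.{u} // β < (aleph 1).ord} → Bool) → X)
    (hf : Continuous f) :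
    ∃ α : Ordinal.{u}, α < (aleph 1).ord ∧
      ∀ x y : {β : Ordinal.{u} // β < (aleph 1).ord} → Bool,
        (∀ β : {β : Ordinal.{u} // β < (aleph 1).ord}, β.1 < α → x β = y β) →
        f x = f y := by
  classical
  have hfu : UniformContinuous f := CompactSpace.uniformContinuous_of_continuous hf
  have key : ∀ n : ℕ, ∃ I : Set {β : Ordinal.{u} // β < (aleph 1).ord}, I.Finite ∧
      ∀ x y : {β : Ordinal.{u} // β < (aleph 1).ord} → Bool,
        (∀ β ∈ I, x β = y β) → dist (f x) (f y) < 1 / (n + 1) := by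
    intro n
    have hε : (0 : ℝ) < 1 / (n + 1) := by positivity
    have hU : {p : X × X | dist p.1 p.2 < 1 / (n + 1)} ∈ 𝓤 X :=
      Metric.dist_mem_uniformity hε
    have hpre := hfu hU
    rw [Filter.mem_map, Pi.uniformity, Filter.mem_iInf'] at hpre
    obtain ⟨I, hIfin, V, hV, -, hUeq, -⟩ := hpre
    refine ⟨I, hIfin, fun x y hxy => ?_⟩
    have hmem : ((x, y) : _ × _) ∈ ⋂ i ∈ I, V i := by
      refine Set.mem_iInter₂.2 fun i hi => ?_
      obtain ⟨s, hs, hsub⟩ := Filter.mem_comap.1 (hV i)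
      have hsId : SetRel.id ⊆ s := by
        have h : 𝓤 Bool = Filter.principal SetRel.id := rfl
        rwa [h, Filter.mem_principal] at hs
      exact hsub (by exact hsId (SetRel.mem_id.2 (hxy i hi)))
    rw [← hUeq] at hmem
    exact hmem
  choose I hIfin hI using key
  set g : ℕ → Ordinal.{u} := fun n => (hIfin n).toFinset.sup fun β => β.1 + 1 with hg
  have hord : (⊥ : Ordinal.{u}) < (aleph 1).ord := by
    simpa using Cardinal.ord_lt_ord.2 (aleph_pos 1)
  refine ⟨⨆ n, g n, ?_, ?_⟩
  · apply Ordinal.iSup_lt_ord_lift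
    · rw [(isRegular_aleph_one).cof_eq]
      simpa using aleph0_lt_aleph_one
    · intro n
      rw [hg]
      refine (Finset.sup_lt_iff hord).2 fun β _ => ?_
      exact (Cardinal.isSuccLimit_ord (aleph0_le_aleph 1)).succ_lt β.2
  · intro x y hxy
    apply eq_of_forall_dist_le
    intro ε hε
    obtain ⟨n, hn⟩ := exists_nat_one_div_lt hε
    refine le_of_lt (lt_trans (hI n x y fun β hβ => ?_) hn)
    apply hxy
    have h1 : β.1 + 1 ≤ g n := by
      rw [hg]
      exact Finset.le_sup (f := fun β => β.1 + 1) ((hIfin n).mem_toFinset.2 hβ)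
    have h2 : g n ≤ ⨆ n, g n := Ordinal.le_iSup g n
    exact lt_of_lt_of_le (Order.lt_succ β.1) (by simpa using h1.trans h2)

/-- Every continuous map from the product space `2^{ω₁}` to a metric space depends
only on the coordinates below some countable ordinal `α`. -/
theorem continuous_map_on_two_pow_omegaOne_depends_on_initial_segment
    (X : Type*) [MetricSpace X]
    (f : ({β : Ordinal // β < (aleph 1).ord} → Bool) → X)
    (hf : Continuous f) :
    ∃ α : Ordinal, α < (aleph 1).ord ∧
      ∀ x y : {β : Ordinal // β < (aleph 1).ord} → Bool,
        (∀ β : {β : Ordinal // β < (aleph 1).ord}, β.1 < α → x β = y β) →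
        f x = f y :=
  aux_continuous_depends_initial_segment X f hf
end

section
/- Let A be a topological space, X a topological space, and suppose φ : A → C(A, X) is surjective with the evaluation map (a, b) ↦ φ a b continuous on A × A. Then for every continuous f : X → X, the map a ↦ f (φ a a) is continuous, equals φ c for some c ∈ A, and x₀ := φ c c satisfies f x₀ = x₀. -/
/-- The explicit fixed point in the Lawvere argument: if `φ : A → C(A, X)` is
surjective and evaluation `(a, b) ↦ φ a b` is jointly continuous, then for every
continuous `f : X → X` the map `a ↦ f (φ a a)` is continuous, equals `φ c` for
some `c`, and `x₀ := φ c c` is a fixed point of `f`. -/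
theorem lawvere_explicit_fixed_point
    {A X : Type*} [TopologicalSpace A] [TopologicalSpace X]
    (φ : A → C(A, X)) (hφ : Function.Surjective φ)
    (heval : Continuous fun p : A × A => φ p.1 p.2)
    (f : X → X) (hf : Continuous f) :
    Continuous (fun a => f (φ a a)) ∧
    ∃ c : A, (∀ a, φ c a = f (φ a a)) ∧ f (φ c c) = φ c c := by
  have hg : Continuous (fun a => f (φ a a)) :=
    hf.comp (heval.comp (continuous_id.prodMk continuous_id))
  refine ⟨hg, ?_⟩
  obtain ⟨c, hc⟩ := hφ ⟨fun a => f (φ a a), hg⟩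
  refine ⟨c, fun a => ?_, ?_⟩
  · exact DFunLike.congr_fun hc a
  · exact (DFunLike.congr_fun hc c).symm
end
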